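/- The translates of the truncated octahedron K by the lattice Λ tile ℝ³: the union ⋃_{λ∈Λ} (λ + K) equals all of ℝ³, and for distinct λ, μ ∈ Λ the interiors of λ + K and μ + K are disjoint. -/

import Mathlib

noncomputable section

open Pointwise

def lam1 : EuclideanSpace ℝ (Fin 3) := Real.sqrt 2 • WithLp.toLp 2 (![1, -1, -1] : Fin 3 → ℝ)
def lam2 : EuclideanSpace ℝ (Fin 3) := Real.sqrt 2 • WithLp.toLp 2 (![-1, 1, -1] : Fin 3 → ℝ)
def lam3 : EuclideanSpace ℝ (Fin 3) := Real.sqrt 2 • WithLp.toLp 2 (![-1, -1, 1] : Fin 3 → ℝ)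

/-- The additive subgroup Λ of ℝ³ generated by λ1, λ2, λ3. -/
def Lambda : AddSubgroup (EuclideanSpace ℝ (Fin 3)) :=
  AddSubgroup.closure {lam1, lam2, lam3}

/-- The truncated octahedron (Kelvin polyhedron). -/
def K : Set (EuclideanSpace ℝ (Fin 3)) :=
  {x | |x 0| ≤ Real.sqrt 2 ∧ |x 1| ≤ Real.sqrt 2 ∧ |x 2| ≤ Real.sqrt 2 ∧
       |x 0| + |x 1| + |x 2| ≤ 3 * Real.sqrt 2 / 2}

/-! ### Auxiliary material -/

lemma sqrt2_pos : (0:ℝ) < Real.sqrt 2 := Real.sqrt_pos.mpr (by norm_num)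

/-- canonical scaled vector -/
def svec (a b c : ℝ) : EuclideanSpace ℝ (Fin 3) :=
  WithLp.toLp 2 ![Real.sqrt 2 * a, Real.sqrt 2 * b, Real.sqrt 2 * c]

lemma svec_0 (a b c : ℝ) : svec a b c 0 = Real.sqrt 2 * a := rfl
lemma svec_1 (a b c : ℝ) : svec a b c 1 = Real.sqrt 2 * b := rfl
lemma svec_2 (a b c : ℝ) : svec a b c 2 = Real.sqrt 2 * c := rfl

lemma eadd_apply (u v : EuclideanSpace ℝ (Fin 3)) (i : Fin 3) : (u + v) i = u i + v i := rfl
lemma esmul_apply (c : ℝ) (v : EuclideanSpace ℝ (Fin 3)) (i : Fin 3) : (c • v) i = c * v i := rfl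
lemma eneg_apply (v : EuclideanSpace ℝ (Fin 3)) (i : Fin 3) : (-v) i = -(v i) := rfl
lemma esub_apply (u v : EuclideanSpace ℝ (Fin 3)) (i : Fin 3) : (u - v) i = u i - v i := rfl

lemma ezsmul_apply (n : ℤ) (v : EuclideanSpace ℝ (Fin 3)) (i : Fin 3) :
    (n • v) i = (n : ℝ) * v i := by
  rw [← Int.cast_smul_eq_zsmul ℝ]; exact esmul_apply _ _ _

lemma hext (u v : EuclideanSpace ℝ (Fin 3)) (h0 : u 0 = v 0) (h1 : u 1 = v 1)
    (h2 : u 2 = v 2) : u = v := by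
  apply PiLp.ext; intro i
  fin_cases i <;> assumption

lemma lam1_eq : lam1 = svec 1 (-1) (-1) := by
  apply hext <;> rfl

lemma lam2_eq : lam2 = svec (-1) 1 (-1) := by
  apply hext <;> rfl

lemma lam3_eq : lam3 = svec (-1) (-1) 1 := by
  apply hext <;> rfl

lemma svec_int_mem (a b c : ℤ) (hab : (a + b) % 2 = 0) (hbc : (b + c) % 2 = 0) :
    svec (a : ℝ) (b : ℝ) (c : ℝ) ∈ Lambda := by
  obtain ⟨p, hp⟩ : ∃ p, b + c = p + p := ⟨(b+c)/2, by omega⟩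
  obtain ⟨q, hq⟩ : ∃ q, a + c = q + q := ⟨(a+c)/2, by omega⟩
  obtain ⟨r, hr⟩ : ∃ r, a + b = r + r := ⟨(a+b)/2, by omega⟩
  have h1 : lam1 ∈ Lambda := AddSubgroup.subset_closure (by simp [Set.mem_insert_iff])
  have h2 : lam2 ∈ Lambda := AddSubgroup.subset_closure (by simp [Set.mem_insert_iff])
  have h3 : lam3 ∈ Lambda := AddSubgroup.subset_closure (by simp [Set.mem_insert_iff])
  have ha : (a:ℝ) = -p + q + r := by exact_mod_cast (by omega : a = -p + q + r)
  have hb : (b:ℝ) = -q + p + r := by exact_mod_cast (by omega : b = -q + p + r)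
  have hc : (c:ℝ) = -r + p + q := by exact_mod_cast (by omega : c = -r + p + q)
  have key : svec (a : ℝ) (b : ℝ) (c : ℝ)
      = (-p) • lam1 + ((-q) • lam2 + (-r) • lam3) := by
    apply hext <;>
      rw [eadd_apply, eadd_apply, ezsmul_apply, ezsmul_apply, ezsmul_apply,
        lam1_eq, lam2_eq, lam3_eq]
    · rw [svec_0, svec_0, svec_0, svec_0, ha]; push_cast; ring
    · rw [svec_1, svec_1, svec_1, svec_1, hb]; push_cast; ring
    · rw [svec_2, svec_2, svec_2, svec_2, hc]; push_cast; ring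
  rw [key]
  exact AddSubgroup.add_mem _ (AddSubgroup.zsmul_mem _ h1 _)
    (AddSubgroup.add_mem _ (AddSubgroup.zsmul_mem _ h2 _) (AddSubgroup.zsmul_mem _ h3 _))

lemma Lambda_rep {d : EuclideanSpace ℝ (Fin 3)} (hd : d ∈ Lambda) :
    ∃ a b c : ℤ, d 0 = Real.sqrt 2 * a ∧ d 1 = Real.sqrt 2 * b ∧ d 2 = Real.sqrt 2 * c ∧
      (a + b) % 2 = 0 ∧ (b + c) % 2 = 0 := by
  induction hd using AddSubgroup.closure_induction with
  | mem x hx =>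
    rcases hx with rfl | rfl | rfl
    · refine ⟨1, -1, -1, ?_, ?_, ?_, by decide, by decide⟩ <;>
        rw [lam1_eq] <;> push_cast <;> first | exact svec_0 _ _ _ | exact svec_1 _ _ _ |
          exact svec_2 _ _ _
    · refine ⟨-1, 1, -1, ?_, ?_, ?_, by decide, by decide⟩ <;>
        rw [lam2_eq] <;> push_cast <;> first | exact svec_0 _ _ _ | exact svec_1 _ _ _ |
          exact svec_2 _ _ _
    · refine ⟨-1, -1, 1, ?_, ?_, ?_, by decide, by decide⟩ <;>
        rw [lam3_eq] <;> push_cast <;> first | exact svec_0 _ _ _ | exact svec_1 _ _ _ |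
          exact svec_2 _ _ _
  | zero =>
    exact ⟨0, 0, 0, by simp, by simp, by simp, by decide, by decide⟩
  | add x y hx hy ihx ihy =>
    obtain ⟨a, b, c, h0, h1, h2, hp1, hp2⟩ := ihx
    obtain ⟨a', b', c', h0', h1', h2', hp1', hp2'⟩ := ihy
    exact ⟨a + a', b + b', c + c', by rw [eadd_apply, h0, h0']; push_cast; ring,
      by rw [eadd_apply, h1, h1']; push_cast; ring,
      by rw [eadd_apply, h2, h2']; push_cast; ring, by omega, by omega⟩
  | neg x hx ihx =>
    obtain ⟨a, b, c, h0, h1, h2, hp1, hp2⟩ := ihx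
    exact ⟨-a, -b, -c, by rw [eneg_apply, h0]; push_cast; ring,
      by rw [eneg_apply, h1]; push_cast; ring,
      by rw [eneg_apply, h2]; push_cast; ring, by omega, by omega⟩

/-- The covering half: every point is inside some translate. -/
lemma cover (x : EuclideanSpace ℝ (Fin 3)) : ∃ l ∈ Lambda, -l + x ∈ K := by
  have hs0 : (0:ℝ) < Real.sqrt 2 := sqrt2_pos
  set s : ℝ := Real.sqrt 2 with hs
  set y : Fin 3 → ℝ := fun i => x i / s with hy
  have hxy : ∀ i, x i = s * y i := by
    intro i; rw [hy]; field_simp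
  have key : ∀ i : Fin 3, ∃ (N M : ℤ), |y i - 2*N| ≤ 1 ∧ |y i - (2*M+1)| ≤ 1 ∧
      |y i - 2*N| + |y i - (2*M+1)| = 1 := by
    intro i
    refine ⟨round (y i / 2), round ((y i - 1)/2), ?_, ?_, ?_⟩
    · have h := abs_sub_round (y i / 2)
      have : y i - 2*(round (y i / 2) : ℝ) = 2 * (y i / 2 - round (y i / 2)) := by ring
      rw [this, abs_mul, abs_of_nonneg (by norm_num : (0:ℝ) ≤ 2)]
      linarith
    · have h := abs_sub_round ((y i - 1) / 2)
      have : y i - (2*(round ((y i - 1) / 2) : ℝ)+1) =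
          2 * ((y i - 1) / 2 - round ((y i - 1) / 2)) := by ring
      rw [this, abs_mul, abs_of_nonneg (by norm_num : (0:ℝ) ≤ 2)]
      linarith
    · have h1 := abs_sub_round (y i / 2)
      have h2 := abs_sub_round ((y i - 1) / 2)
      set N : ℤ := round (y i / 2)
      set M : ℤ := round ((y i - 1)/2)
      have hE : |y i - 2*N| ≤ 1 := by
        have : y i - 2*(N : ℝ) = 2 * (y i / 2 - N) := by ring
        rw [this, abs_mul, abs_of_nonneg (by norm_num : (0:ℝ) ≤ 2)]; linarith
      have hO : |y i - (2*M+1)| ≤ 1 := by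
        have : y i - (2*(M : ℝ)+1) = 2 * ((y i - 1) / 2 - M) := by ring
        rw [this, abs_mul, abs_of_nonneg (by norm_num : (0:ℝ) ≤ 2)]; linarith
      -- the difference is an odd integer of absolute value ≤ 2, hence ±1
      have hdiff : (y i - 2*N) - (y i - (2*M+1)) = ((2*(M - N) + 1 : ℤ) : ℝ) := by
        push_cast; ring
      have habs : |((2*(M - N) + 1 : ℤ) : ℝ)| ≤ 2 := by
        rw [← hdiff]
        calc |(y i - 2*N) - (y i - (2*M+1))| ≤ |y i - 2*N| + |y i - (2*M+1)| :=
          abs_sub _ _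
        _ ≤ 2 := by linarith
      have hZ : |(2*(M - N) + 1 : ℤ)| ≤ 2 := by
        rw [← Int.cast_abs] at habs; exact_mod_cast habs
      have hZ' := abs_le.mp hZ
      have : M - N = 0 ∨ M - N = -1 := by omega
      rcases this with h | h
      · -- e - o = 1
        have he : (y i - 2*N) - (y i - (2*M+1)) = 1 := by
          rw [hdiff, h]; norm_num
        have h1' : 0 ≤ y i - 2*N := by
          have := abs_le.mp hO; linarith
        have h2' : y i - (2*M+1) ≤ 0 := by
          have := abs_le.mp hE; linarith
        rw [abs_of_nonneg h1', abs_of_nonpos h2']; linarith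
      · -- e - o = -1
        have he : (y i - 2*N) - (y i - (2*M+1)) = -1 := by
          rw [hdiff, h]; norm_num
        have h1' : y i - 2*N ≤ 0 := by
          have := abs_le.mp hO; linarith
        have h2' : 0 ≤ y i - (2*M+1) := by
          have := abs_le.mp hE; linarith
        rw [abs_of_nonpos h1', abs_of_nonneg h2']; linarith
  choose N M hN hM hNM using key
  by_cases hcase : |y 0 - 2*N 0| + |y 1 - 2*N 1| + |y 2 - 2*N 2| ≤ 3/2
  · -- use the even lattice point
    refine ⟨svec ((2*N 0 : ℤ) : ℝ) ((2*N 1 : ℤ) : ℝ) ((2*N 2 : ℤ) : ℝ),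
      svec_int_mem _ _ _ (by omega) (by omega), ?_⟩
    have c0 : (-(svec ((2*N 0 : ℤ) : ℝ) ((2*N 1 : ℤ) : ℝ) ((2*N 2 : ℤ) : ℝ)) + x) 0
        = s * (y 0 - 2*N 0) := by
      rw [eadd_apply, eneg_apply, svec_0, hxy 0]; push_cast; ring
    have c1 : (-(svec ((2*N 0 : ℤ) : ℝ) ((2*N 1 : ℤ) : ℝ) ((2*N 2 : ℤ) : ℝ)) + x) 1
        = s * (y 1 - 2*N 1) := by
      rw [eadd_apply, eneg_apply, svec_1, hxy 1]; push_cast; ring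
    have c2 : (-(svec ((2*N 0 : ℤ) : ℝ) ((2*N 1 : ℤ) : ℝ) ((2*N 2 : ℤ) : ℝ)) + x) 2
        = s * (y 2 - 2*N 2) := by
      rw [eadd_apply, eneg_apply, svec_2, hxy 2]; push_cast; ring
    refine ⟨?_, ?_, ?_, ?_⟩
    · rw [c0, abs_mul, abs_of_pos hs0]
      exact mul_le_of_le_one_right hs0.le (hN 0)
    · rw [c1, abs_mul, abs_of_pos hs0]
      exact mul_le_of_le_one_right hs0.le (hN 1)
    · rw [c2, abs_mul, abs_of_pos hs0]
      exact mul_le_of_le_one_right hs0.le (hN 2)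
    · rw [c0, c1, c2, abs_mul, abs_mul, abs_mul, abs_of_pos hs0]
      have h' := mul_le_mul_of_nonneg_left hcase hs0.le
      nlinarith [h']
  · -- use the odd lattice point
    have hcase' : |y 0 - (2*M 0+1)| + |y 1 - (2*M 1+1)| + |y 2 - (2*M 2+1)| ≤ 3/2 := by
      have h0 := hNM 0; have h1 := hNM 1; have h2 := hNM 2
      push_neg at hcase
      linarith
    refine ⟨svec ((2*M 0 + 1 : ℤ) : ℝ) ((2*M 1 + 1 : ℤ) : ℝ) ((2*M 2 + 1 : ℤ) : ℝ),
      svec_int_mem _ _ _ (by omega) (by omega), ?_⟩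
    have c0 : (-(svec ((2*M 0 + 1 : ℤ) : ℝ) ((2*M 1 + 1 : ℤ) : ℝ) ((2*M 2 + 1 : ℤ) : ℝ)) + x) 0
        = s * (y 0 - (2*M 0+1)) := by
      rw [eadd_apply, eneg_apply, svec_0, hxy 0]; push_cast; ring
    have c1 : (-(svec ((2*M 0 + 1 : ℤ) : ℝ) ((2*M 1 + 1 : ℤ) : ℝ) ((2*M 2 + 1 : ℤ) : ℝ)) + x) 1
        = s * (y 1 - (2*M 1+1)) := by
      rw [eadd_apply, eneg_apply, svec_1, hxy 1]; push_cast; ring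
    have c2 : (-(svec ((2*M 0 + 1 : ℤ) : ℝ) ((2*M 1 + 1 : ℤ) : ℝ) ((2*M 2 + 1 : ℤ) : ℝ)) + x) 2
        = s * (y 2 - (2*M 2+1)) := by
      rw [eadd_apply, eneg_apply, svec_2, hxy 2]; push_cast; ring
    refine ⟨?_, ?_, ?_, ?_⟩
    · rw [c0, abs_mul, abs_of_pos hs0]
      exact mul_le_of_le_one_right hs0.le (hM 0)
    · rw [c1, abs_mul, abs_of_pos hs0]
      exact mul_le_of_le_one_right hs0.le (hM 1)
    · rw [c2, abs_mul, abs_of_pos hs0]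
      exact mul_le_of_le_one_right hs0.le (hM 2)
    · rw [c0, c1, c2, abs_mul, abs_mul, abs_mul, abs_of_pos hs0]
      have h' := mul_le_mul_of_nonneg_left hcase' hs0.le
      nlinarith [h']

lemma ezero_apply (i : Fin 3) : (0 : EuclideanSpace ℝ (Fin 3)) i = 0 := rfl

lemma K_abs_le {z : EuclideanSpace ℝ (Fin 3)} (hz : z ∈ K) : ∀ j : Fin 3, |z j| ≤ Real.sqrt 2 := by
  intro j; fin_cases j
  · exact hz.1
  · exact hz.2.1
  · exact hz.2.2.1

lemma interior_K_strict {x : EuclideanSpace ℝ (Fin 3)} (hx : x ∈ interior K) :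
    |x 0| < Real.sqrt 2 ∧ |x 1| < Real.sqrt 2 ∧ |x 2| < Real.sqrt 2 ∧
      |x 0| + |x 1| + |x 2| < 3 * Real.sqrt 2 / 2 := by
  obtain ⟨ε, hε, hball⟩ := Metric.mem_nhds_iff.mp (mem_interior_iff_mem_nhds.mp hx)
  set σ : Fin 3 → ℝ := fun i => if 0 ≤ x i then 1 else -1 with hσ
  have hσ1 : ∀ i, |σ i| = 1 := by
    intro i; rw [hσ]; dsimp only; split_ifs <;> norm_num
  have hσadd : ∀ (i : Fin 3) (δ : ℝ), 0 ≤ δ → |x i + δ * σ i| = |x i| + δ := by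
    intro i δ hδ
    rw [hσ]; dsimp only
    split_ifs with h
    · rw [mul_one, abs_of_nonneg h, abs_of_nonneg (by linarith)]
    · push_neg at h
      have h1 : x i + δ * (-1) = x i - δ := by ring
      rw [h1, abs_of_nonpos (by linarith), abs_of_neg h]; ring
  have coord : ∀ j : Fin 3, |x j| + ε/2 ≤ Real.sqrt 2 := by
    intro j
    have hx' : x + (ε/2) • EuclideanSpace.single j (σ j) ∈ K := by
      apply hball
      rw [Metric.mem_ball, dist_eq_norm]
      have h4 : x + (ε/2) • EuclideanSpace.single j (σ j) - x
          = (ε/2) • EuclideanSpace.single j (σ j) := by abel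
      rw [h4, norm_smul, EuclideanSpace.norm_single, Real.norm_eq_abs, Real.norm_eq_abs,
        hσ1 j, abs_of_pos (by linarith : (0:ℝ) < ε/2)]
      linarith
    have happ : (x + (ε/2) • EuclideanSpace.single j (σ j)) j = x j + (ε/2) * σ j := by
      rw [eadd_apply, esmul_apply, EuclideanSpace.single_apply]
      simp
    have hle := K_abs_le hx' j
    rw [happ, hσadd j (ε/2) (by linarith)] at hle
    exact hle
  have sum3 : |x 0| + |x 1| + |x 2| + 3*(ε/4) ≤ 3 * Real.sqrt 2 / 2 := by
    set u : EuclideanSpace ℝ (Fin 3) := EuclideanSpace.single 0 (σ 0) +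
      (EuclideanSpace.single 1 (σ 1) + EuclideanSpace.single 2 (σ 2)) with hu
    have hnu : ‖u‖ ≤ 3 := by
      rw [hu]
      refine le_trans (norm_add_le _ _) ?_
      refine le_trans (add_le_add le_rfl (norm_add_le _ _)) ?_
      rw [EuclideanSpace.norm_single, EuclideanSpace.norm_single, EuclideanSpace.norm_single,
        Real.norm_eq_abs, Real.norm_eq_abs, Real.norm_eq_abs, hσ1 0, hσ1 1, hσ1 2]
      norm_num
    have hx' : x + (ε/4) • u ∈ K := by
      apply hball
      rw [Metric.mem_ball, dist_eq_norm]
      have h4 : x + (ε/4) • u - x = (ε/4) • u := by abel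
      rw [h4, norm_smul, Real.norm_eq_abs, abs_of_pos (by linarith : (0:ℝ) < ε/4)]
      nlinarith [norm_nonneg u]
    have happ : ∀ i : Fin 3, (x + (ε/4) • u) i = x i + (ε/4) * σ i := by
      intro i
      rw [eadd_apply, esmul_apply, hu, eadd_apply, eadd_apply,
        EuclideanSpace.single_apply, EuclideanSpace.single_apply, EuclideanSpace.single_apply]
      fin_cases i <;> simp
    have hk4 := hx'.2.2.2
    rw [happ 0, happ 1, happ 2, hσadd 0 _ (by linarith), hσadd 1 _ (by linarith),
      hσadd 2 _ (by linarith)] at hk4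
    linarith
  have c0 := coord 0; have c1 := coord 1; have c2 := coord 2
  exact ⟨by linarith, by linarith, by linarith, by linarith⟩

/-- The translates of the truncated octahedron `K` by the lattice Λ tile ℝ³:
their union is all of ℝ³ and distinct translates have disjoint interiors. -/
theorem kelvin_polyhedron_tiles_space :
    (⋃ l ∈ (Lambda : Set (EuclideanSpace ℝ (Fin 3))), l +ᵥ K) = Set.univ ∧
    (∀ l ∈ Lambda, ∀ m ∈ Lambda, l ≠ m →
      interior (l +ᵥ K) ∩ interior (m +ᵥ K) = ∅) := by
  constructor
  · apply Set.eq_univ_iff_forall.mpr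
    intro x
    obtain ⟨l, hl, hK⟩ := cover x
    refine Set.mem_iUnion₂.mpr ⟨l, hl, ?_⟩
    rw [Set.mem_vadd_set_iff_neg_vadd_mem, vadd_eq_add]
    exact hK
  · intro l hl m hm hne
    rw [Set.eq_empty_iff_forall_notMem]
    rintro x ⟨hx1, hx2⟩
    rw [interior_vadd, Set.mem_vadd_set_iff_neg_vadd_mem, vadd_eq_add] at hx1 hx2
    obtain ⟨p1, p2, p3, p4⟩ := interior_K_strict hx1
    obtain ⟨q1, q2, q3, q4⟩ := interior_K_strict hx2
    have hd : l - m ∈ Lambda := AddSubgroup.sub_mem _ hl hm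
    obtain ⟨a, b, c, h0, h1, h2, hpar1, hpar2⟩ := Lambda_rep hd
    have e0 : Real.sqrt 2 * a = (-m + x) 0 - (-l + x) 0 := by
      rw [← h0, esub_apply, eadd_apply, eadd_apply, eneg_apply, eneg_apply]; ring
    have e1 : Real.sqrt 2 * b = (-m + x) 1 - (-l + x) 1 := by
      rw [← h1, esub_apply, eadd_apply, eadd_apply, eneg_apply, eneg_apply]; ring
    have e2 : Real.sqrt 2 * c = (-m + x) 2 - (-l + x) 2 := by
      rw [← h2, esub_apply, eadd_apply, eadd_apply, eneg_apply, eneg_apply]; ring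
    have t0 : |Real.sqrt 2 * (a:ℝ)| < 2 * Real.sqrt 2 := by
      rw [e0]
      calc |(-m + x) 0 - (-l + x) 0| ≤ |(-m + x) 0| + |(-l + x) 0| := abs_sub _ _
      _ < 2 * Real.sqrt 2 := by linarith
    have t1 : |Real.sqrt 2 * (b:ℝ)| < 2 * Real.sqrt 2 := by
      rw [e1]
      calc |(-m + x) 1 - (-l + x) 1| ≤ |(-m + x) 1| + |(-l + x) 1| := abs_sub _ _
      _ < 2 * Real.sqrt 2 := by linarith
    have t2 : |Real.sqrt 2 * (c:ℝ)| < 2 * Real.sqrt 2 := by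
      rw [e2]
      calc |(-m + x) 2 - (-l + x) 2| ≤ |(-m + x) 2| + |(-l + x) 2| := abs_sub _ _
      _ < 2 * Real.sqrt 2 := by linarith
    have tsum : |Real.sqrt 2 * (a:ℝ)| + |Real.sqrt 2 * (b:ℝ)| + |Real.sqrt 2 * (c:ℝ)|
        < 3 * Real.sqrt 2 := by
      rw [e0, e1, e2]
      have u0 : |(-m + x) 0 - (-l + x) 0| ≤ |(-m + x) 0| + |(-l + x) 0| := abs_sub _ _
      have u1 : |(-m + x) 1 - (-l + x) 1| ≤ |(-m + x) 1| + |(-l + x) 1| := abs_sub _ _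
      have u2 : |(-m + x) 2 - (-l + x) 2| ≤ |(-m + x) 2| + |(-l + x) 2| := abs_sub _ _
      linarith
    have hs0 := sqrt2_pos
    simp only [abs_mul, abs_of_pos hs0] at t0 t1 t2 tsum
    have hA : |(a:ℝ)| < 2 := by
      have := (mul_lt_mul_iff_right₀ hs0).mp (by linarith : Real.sqrt 2 * |(a:ℝ)| < Real.sqrt 2 * 2)
      linarith
    have hB : |(b:ℝ)| < 2 := by
      have := (mul_lt_mul_iff_right₀ hs0).mp (by linarith : Real.sqrt 2 * |(b:ℝ)| < Real.sqrt 2 * 2)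
      linarith
    have hC : |(c:ℝ)| < 2 := by
      have := (mul_lt_mul_iff_right₀ hs0).mp (by linarith : Real.sqrt 2 * |(c:ℝ)| < Real.sqrt 2 * 2)
      linarith
    have hS : |(a:ℝ)| + |(b:ℝ)| + |(c:ℝ)| < 3 := by
      have := (mul_lt_mul_iff_right₀ hs0).mp
        (by linarith : Real.sqrt 2 * (|(a:ℝ)| + |(b:ℝ)| + |(c:ℝ)|) < Real.sqrt 2 * 3)
      linarith
    have hAZ : |a| < 2 := by rw [← Int.cast_abs] at hA; exact_mod_cast hA
    have hBZ : |b| < 2 := by rw [← Int.cast_abs] at hB; exact_mod_cast hB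
    have hCZ : |c| < 2 := by rw [← Int.cast_abs] at hC; exact_mod_cast hC
    have hSZ : |a| + |b| + |c| < 3 := by
      rw [← Int.cast_abs, ← Int.cast_abs, ← Int.cast_abs] at hS; exact_mod_cast hS
    have hne0 : ¬(a = 0 ∧ b = 0 ∧ c = 0) := by
      rintro ⟨rfl, rfl, rfl⟩
      apply hne
      have hz : l - m = 0 := by
        apply hext
        · rw [h0, ezero_apply]; norm_num
        · rw [h1, ezero_apply]; norm_num
        · rw [h2, ezero_apply]; norm_num
      exact sub_eq_zero.mp hz
    have hA' := abs_lt.mp hAZ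
    have hB' := abs_lt.mp hBZ
    have hC' := abs_lt.mp hCZ
    rw [Int.abs_eq_natAbs, Int.abs_eq_natAbs, Int.abs_eq_natAbs] at hSZ
    omega

end
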